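/- Let g : (0,1) → ℝ be Lipschitz with g'(x) ≠ 0 for a.e. x, and suppose the essential supremum over t ∈ ℝ of the cardinality of g⁻¹({t}) is finite. Then there exists a nonempty open interval I ⊆ (0,1) on which g is strictly monotone. -/

import Mathlib

open MeasureTheory Set

theorem somewhere_monotone
    (g : ℝ → ℝ) (K : NNReal) (hg : LipschitzOnWith K g (Ioo 0 1))
    (hder : ∀ᵐ x ∂(volume.restrict (Ioo (0:ℝ) 1)),
      HasDerivAt g (deriv g x) x ∧ deriv g x ≠ 0)
    (M : ℕ)
    (hcard : ∀ᵐ t : ℝ, (g ⁻¹' {t} ∩ Ioo 0 1).Finite ∧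
      (g ⁻¹' {t} ∩ Ioo 0 1).ncard ≤ M) :
    ∃ a b : ℝ, 0 ≤ a ∧ a < b ∧ b ≤ 1 ∧
      (StrictMonoOn g (Ioo a b) ∨ StrictAntiOn g (Ioo a b)) := by
  by_contra hcon
  push_neg at hcon
  have hcont : ContinuousOn g (Ioo 0 1) := hg.continuousOn
  -- Lemma A : g is not constant on any nonempty open subinterval of (0,1)
  have hnc : ∀ u v : ℝ, Ioo u v ⊆ Ioo 0 1 → u < v →
      ∃ p ∈ Ioo u v, ∃ q ∈ Ioo u v, g p ≠ g q := by
    intro u v hsub huv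
    by_contra hcst
    push_neg at hcst
    have hbad : (volume.restrict (Ioo (0:ℝ) 1))
        {x | ¬ (HasDerivAt g (deriv g x) x ∧ deriv g x ≠ 0)} = 0 :=
      ae_iff.mp hder
    have hsub2 : Ioo u v ⊆ {x | ¬ (HasDerivAt g (deriv g x) x ∧ deriv g x ≠ 0)} := by
      intro x hx
      simp only [mem_setOf_eq]
      intro h
      have hev : g =ᶠ[nhds x] fun _ => g x := by
        filter_upwards [Ioo_mem_nhds hx.1 hx.2] with y hy
        exact hcst y hy x hx
      have h0 : HasDerivAt g 0 x :=
        (hasDerivAt_const x (g x)).congr_of_eventuallyEq hev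
      exact h.2 (h.1.unique h0)
    have hz := measure_mono_null hsub2 hbad
    rw [Measure.restrict_apply measurableSet_Ioo, inter_eq_left.mpr hsub,
      Real.volume_Ioo] at hz
    rw [ENNReal.ofReal_eq_zero] at hz
    linarith
  -- Lemma B : g is non-injective on every nonempty open subinterval of (0,1)
  have hni : ∀ u v : ℝ, Ioo u v ⊆ Ioo 0 1 → u < v →
      ∃ x ∈ Ioo u v, ∃ y ∈ Ioo u v, x < y ∧ g x = g y := by
    intro u v hsub huv
    by_contra h
    push_neg at h
    have hinj : InjOn g (Ioo u v) := by
      intro x hx y hy hxy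
      by_contra hne
      rcases lt_or_gt_of_ne hne with h1 | h1
      · exact (h x hx y hy h1) hxy
      · exact (h y hy x hx h1) hxy.symm
    have hmid : (0:ℝ) < (u+v)/2 ∧ (u+v)/2 < 1 := by
      have hm : (u+v)/2 ∈ Ioo u v := by rw [Set.mem_Ioo]; constructor <;> linarith
      have := hsub hm
      rw [Set.mem_Ioo] at this
      exact this
    have hu0 : (0:ℝ) ≤ u := by
      by_contra hu
      push_neg at hu
      have hm : u/2 ∈ Ioo u v := by rw [Set.mem_Ioo]; constructor <;> linarith [hmid.1]
      have := hsub hm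
      rw [Set.mem_Ioo] at this
      linarith [this.1]
    have hv1 : v ≤ (1:ℝ) := by
      by_contra hv
      push_neg at hv
      have hm : (1+v)/2 ∈ Ioo u v := by rw [Set.mem_Ioo]; constructor <;> linarith [hmid.2]
      have := hsub hm
      rw [Set.mem_Ioo] at this
      linarith [this.2]
    rcases ContinuousOn.strictMonoOn_of_injOn_Ioo huv (hcont.mono hsub) hinj with hm | hm
    · exact (hcon u v hu0 huv hv1).1 hm
    · exact (hcon u v hu0 huv hv1).2 hm
  -- Splitting lemma
  have split : ∀ a b α β : ℝ, Ioo a b ⊆ Ioo 0 1 → a < b → α < β →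
      (∀ t ∈ Ioo α β, ∃ x ∈ Ioo a b, g x = t) →
      ∃ α' β' x c y : ℝ, α < α' ∧ α' < β' ∧ β' < β ∧
        a < x ∧ x < c ∧ c < y ∧ y < b ∧
        (∀ t ∈ Ioo α' β', ∃ z ∈ Ioo x c, g z = t) ∧
        (∀ t ∈ Ioo α' β', ∃ z ∈ Ioo c y, g z = t) := by
    intro a b α β hsub hab hαβ hcov
    obtain ⟨a1, ha1⟩ : ∃ a1 : ℝ, a1 = α + (β - α)/4 := ⟨_, rfl⟩
    obtain ⟨b1, hb1⟩ : ∃ b1 : ℝ, b1 = β - (β - α)/4 := ⟨_, rfl⟩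
    have h1 : α < a1 := by rw [ha1]; linarith
    have h2 : a1 < b1 := by rw [ha1, hb1]; linarith
    have h3 : b1 < β := by rw [hb1]; linarith
    obtain ⟨p, hp, hgp⟩ := hcov a1 (by rw [Set.mem_Ioo]; exact ⟨h1, lt_trans h2 h3⟩)
    obtain ⟨q, hq, hgq⟩ := hcov b1 (by rw [Set.mem_Ioo]; exact ⟨lt_trans h1 h2, h3⟩)
    have huIcc : uIcc p q ⊆ Ioo a b :=
      Set.OrdConnected.uIcc_subset Set.ordConnected_Ioo hp hq
    have hconpq : ContinuousOn g (uIcc p q) := hcont.mono (huIcc.trans hsub)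
    have hm0 : (a1 + b1)/2 ∈ uIcc (g p) (g q) := by
      rw [hgp, hgq, uIcc_of_le h2.le, Set.mem_Icc]
      constructor <;> linarith
    obtain ⟨r, hr, hgr⟩ := intermediate_value_uIcc hconpq hm0
    have hrab : r ∈ Ioo a b := huIcc hr
    have hca : ContinuousAt g r :=
      hcont.continuousAt (Ioo_mem_nhds (hsub hrab).1 (hsub hrab).2)
    obtain ⟨δ1, hδ1pos, hδ1⟩ := Metric.continuousAt_iff.mp hca ((b1 - a1)/2) (by linarith)
    obtain ⟨ε, hε⟩ : ∃ ε : ℝ, ε = min (min δ1 (r - a)) (b - r) := ⟨_, rfl⟩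
    rw [Set.mem_Ioo] at hrab
    have hεpos : 0 < ε := by
      rw [hε]
      exact lt_min (lt_min hδ1pos (by linarith [hrab.1])) (by linarith [hrab.2])
    have hεδ : ε ≤ δ1 := by
      rw [hε]; exact le_trans (min_le_left _ _) (min_le_left _ _)
    have hεa : ε ≤ r - a := by
      rw [hε]; exact le_trans (min_le_left _ _) (min_le_right _ _)
    have hεb : ε ≤ b - r := by rw [hε]; exact min_le_right _ _
    have hval : ∀ s ∈ Ioo (r - ε) (r + ε), a1 < g s ∧ g s < b1 := by
      intro s hs
      rw [Set.mem_Ioo] at hs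
      have hd : dist s r < δ1 := by
        rw [Real.dist_eq, abs_lt]
        constructor <;> linarith [hs.1, hs.2]
      have hds := hδ1 hd
      rw [Real.dist_eq, abs_lt, hgr] at hds
      constructor <;> linarith [hds.1, hds.2]
    have hsubε : Ioo (r - ε) (r + ε) ⊆ Ioo a b :=
      Ioo_subset_Ioo (by linarith) (by linarith)
    obtain ⟨x, hx, y, hy, hxy, hgxy⟩ :=
      hni (r - ε) (r + ε) (hsubε.trans hsub) (by linarith)
    have hv0 := hval x hx
    have hIccsub : Icc x y ⊆ Ioo (r - ε) (r + ε) := Icc_subset_Ioo hx.1 hy.2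
    have contIcc : ContinuousOn g (Icc x y) :=
      hcont.mono ((hIccsub.trans hsubε).trans hsub)
    obtain ⟨c, hc, hcmax⟩ :=
      isCompact_Icc.exists_isMaxOn (nonempty_Icc.mpr hxy.le) contIcc
    obtain ⟨c', hc', hcmin⟩ :=
      isCompact_Icc.exists_isMinOn (nonempty_Icc.mpr hxy.le) contIcc
    have haX : a < x := (hsubε hx).1
    have hyB : y < b := (hsubε hy).2
    rcases lt_or_ge (g x) (g c) with hmax | hmax
    · -- maximum hump
      have hcx : x < c := by
        rcases hc.1.lt_or_eq with h | h
        · exact h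
        · exfalso; rw [← h] at hmax; exact lt_irrefl _ hmax
      have hcy : c < y := by
        rcases hc.2.lt_or_eq with h | h
        · exact h
        · exfalso; rw [h, ← hgxy] at hmax; exact lt_irrefl _ hmax
      refine ⟨g x, min (g c) b1, x, c, y, by linarith [hv0.1],
        lt_min hmax hv0.2, lt_of_le_of_lt (min_le_right _ _) h3,
        haX, hcx, hcy, hyB, ?_, ?_⟩
      · intro t ht
        rw [Set.mem_Ioo] at ht
        have ht' : t ∈ Ioo (g x) (g c) := by
          rw [Set.mem_Ioo]
          exact ⟨ht.1, lt_of_lt_of_le ht.2 (min_le_left _ _)⟩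
        obtain ⟨z, hz, hgz⟩ := intermediate_value_Ioo hcx.le
          (contIcc.mono (Icc_subset_Icc le_rfl hc.2)) ht'
        exact ⟨z, hz, hgz⟩
      · intro t ht
        have ht' : t ∈ Ioo (g y) (g c) := ⟨hgxy ▸ ht.1, lt_of_lt_of_le ht.2 (min_le_left _ _)⟩
        obtain ⟨z, hz, hgz⟩ := intermediate_value_Ioo' hcy.le
          (contIcc.mono (Icc_subset_Icc hc.1 le_rfl)) ht'
        exact ⟨z, hz, hgz⟩
    · rcases lt_or_ge (g c') (g x) with hmin | hmin
      · -- minimum hump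
        have hcx : x < c' := by
          rcases hc'.1.lt_or_eq with h | h
          · exact h
          · exfalso; rw [← h] at hmin; exact lt_irrefl _ hmin
        have hcy : c' < y := by
          rcases hc'.2.lt_or_eq with h | h
          · exact h
          · exfalso; rw [h, ← hgxy] at hmin; exact lt_irrefl _ hmin
        refine ⟨max (g c') a1, g x, x, c', y,
          lt_of_lt_of_le h1 (le_max_right _ _), max_lt hmin hv0.1,
          lt_trans hv0.2 h3, haX, hcx, hcy, hyB, ?_, ?_⟩
        · intro t ht
          have ht' : t ∈ Ioo (g c') (g x) := ⟨lt_of_le_of_lt (le_max_left _ _) ht.1, ht.2⟩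
          obtain ⟨z, hz, hgz⟩ := intermediate_value_Ioo' hcx.le
            (contIcc.mono (Icc_subset_Icc le_rfl hc'.2)) ht'
          exact ⟨z, hz, hgz⟩
        · intro t ht
          have ht' : t ∈ Ioo (g c') (g y) :=
            ⟨lt_of_le_of_lt (le_max_left _ _) ht.1, hgxy ▸ ht.2⟩
          obtain ⟨z, hz, hgz⟩ := intermediate_value_Ioo hcy.le
            (contIcc.mono (Icc_subset_Icc hc'.1 le_rfl)) ht'
          exact ⟨z, hz, hgz⟩
      · -- g is constant on [x,y] : contradiction
        exfalso
        obtain ⟨p', hp', q', hq', hne⟩ := hnc x y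
          (((Ioo_subset_Ioo hx.1.le hy.2.le).trans hsubε).trans hsub) hxy
        have e1 : g p' = g x :=
          le_antisymm (le_trans (isMaxOn_iff.mp hcmax p' (Ioo_subset_Icc_self hp')) hmax)
            (le_trans hmin (isMinOn_iff.mp hcmin p' (Ioo_subset_Icc_self hp')))
        have e2 : g q' = g x :=
          le_antisymm (le_trans (isMaxOn_iff.mp hcmax q' (Ioo_subset_Icc_self hq')) hmax)
            (le_trans hmin (isMinOn_iff.mp hcmin q' (Ioo_subset_Icc_self hq')))
        exact hne (e1.trans e2.symm)
  -- Main induction : n+1 disjoint open intervals covering a common value interval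
  have key : ∀ n : ℕ, ∃ α β : ℝ, α < β ∧ ∃ L : List (ℝ × ℝ),
      L.length = n + 1 ∧
      L.Pairwise (fun p q => Disjoint (Ioo p.1 p.2) (Ioo q.1 q.2)) ∧
      ∀ p ∈ L, Ioo p.1 p.2 ⊆ Ioo 0 1 ∧ ∀ t ∈ Ioo α β, ∃ x ∈ Ioo p.1 p.2, g x = t := by
    intro n
    induction n with
    | zero =>
      obtain ⟨p, hp, q, hq, hne⟩ := hnc 0 1 subset_rfl zero_lt_one
      have base : ∀ p q : ℝ, p ∈ Ioo (0:ℝ) 1 → q ∈ Ioo (0:ℝ) 1 → g p < g q →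
          ∃ α β : ℝ, α < β ∧ ∀ t ∈ Ioo α β, ∃ x ∈ Ioo (0:ℝ) 1, g x = t := by
        intro p q hp hq h
        refine ⟨g p, g q, h, fun t ht => ?_⟩
        have huIcc : uIcc p q ⊆ Ioo (0:ℝ) 1 :=
          Set.OrdConnected.uIcc_subset Set.ordConnected_Ioo hp hq
        have htm : t ∈ uIcc (g p) (g q) := by
          rw [uIcc_of_le h.le]; exact Ioo_subset_Icc_self ht
        obtain ⟨x, hx, hgx⟩ := intermediate_value_uIcc (hcont.mono huIcc) htm
        exact ⟨x, huIcc hx, hgx⟩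
      have hαβ : ∃ α β : ℝ, α < β ∧ ∀ t ∈ Ioo α β, ∃ x ∈ Ioo (0:ℝ) 1, g x = t := by
        rcases hne.lt_or_gt with h | h
        · exact base p q hp hq h
        · exact base q p hq hp h
      obtain ⟨α, β, hαβ, hcov⟩ := hαβ
      refine ⟨α, β, hαβ, [((0:ℝ), (1:ℝ))], rfl, List.pairwise_singleton _ _, ?_⟩
      intro pr hpr
      rw [List.mem_singleton] at hpr
      subst hpr
      exact ⟨subset_rfl, hcov⟩
    | succ n ih =>
      obtain ⟨α, β, hαβ, L, hlen, hpw, hmem⟩ := ih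
      rcases L with _ | ⟨hd, tl⟩
      · simp at hlen
      have hhd := hmem hd List.mem_cons_self
      obtain ⟨x0, hx0, -⟩ := hhd.2 ((α + β)/2)
        (by rw [Set.mem_Ioo]; constructor <;> linarith)
      have hhd12 : hd.1 < hd.2 := by
        rw [Set.mem_Ioo] at hx0; exact lt_trans hx0.1 hx0.2
      obtain ⟨α', β', x, c, y, hαα', hα'β', hβ'β, h1x, hxc, hcy, hyb, hcov1, hcov2⟩ :=
        split hd.1 hd.2 α β hhd.1 hhd12 hαβ hhd.2
      have hsub1 : Ioo x c ⊆ Ioo hd.1 hd.2 := Ioo_subset_Ioo h1x.le (by linarith)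
      have hsub2 : Ioo c y ⊆ Ioo hd.1 hd.2 := Ioo_subset_Ioo (by linarith) hyb.le
      rw [List.pairwise_cons] at hpw
      refine ⟨α', β', hα'β', (x, c) :: (c, y) :: tl, ?_, ?_, ?_⟩
      · simp only [List.length_cons] at hlen ⊢; omega
      · refine List.Pairwise.cons ?_ (List.Pairwise.cons ?_ hpw.2)
        · intro pr hpr
          rcases List.mem_cons.mp hpr with h | h
          · subst h
            rw [Set.disjoint_left]
            intro z hz1 hz2
            exact absurd (lt_trans hz1.2 hz2.1) (lt_irrefl z)
          · exact (hpw.1 pr h).mono_left hsub1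
        · intro pr hpr
          exact (hpw.1 pr hpr).mono_left hsub2
      · intro pr hpr
        have hIoosub : Ioo α' β' ⊆ Ioo α β := Ioo_subset_Ioo hαα'.le hβ'β.le
        rcases List.mem_cons.mp hpr with h | h
        · subst h
          exact ⟨hsub1.trans hhd.1, hcov1⟩
        rcases List.mem_cons.mp h with h | h
        · subst h
          exact ⟨hsub2.trans hhd.1, hcov2⟩
        · have hh := hmem pr (List.mem_cons_of_mem _ h)
          exact ⟨hh.1, fun t ht => hh.2 t (hIoosub ht)⟩
  -- Conclusion : pick a good value t in the common interval
  obtain ⟨α, β, hαβ, L, hlen, hpw, hmem⟩ := key M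
  have hBnull : volume {t : ℝ | ¬ ((g ⁻¹' {t} ∩ Ioo 0 1).Finite ∧
      (g ⁻¹' {t} ∩ Ioo 0 1).ncard ≤ M)} = 0 := ae_iff.mp hcard
  obtain ⟨t, ht, htfin, htle⟩ : ∃ t ∈ Ioo α β, (g ⁻¹' {t} ∩ Ioo 0 1).Finite ∧
      (g ⁻¹' {t} ∩ Ioo 0 1).ncard ≤ M := by
    by_contra hno
    push_neg at hno
    have hsubB : Ioo α β ⊆ {t : ℝ | ¬ ((g ⁻¹' {t} ∩ Ioo 0 1).Finite ∧
        (g ⁻¹' {t} ∩ Ioo 0 1).ncard ≤ M)} := by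
      intro t ht
      simp only [mem_setOf_eq]
      intro hcontra
      exact absurd (hno t ht hcontra.1) (not_lt.mpr hcontra.2)
    have hz := measure_mono_null hsubB hBnull
    rw [Real.volume_Ioo, ENNReal.ofReal_eq_zero] at hz
    linarith
  have hpts : ∀ i : Fin L.length, ∃ x, x ∈ Ioo (L.get i).1 (L.get i).2 ∧ g x = t := by
    intro i
    obtain ⟨x, hx, hgx⟩ := (hmem _ (L.get_mem i)).2 t ht
    exact ⟨x, hx, hgx⟩
  choose f hf1 hf2 using hpts
  have hijne : ∀ i j : Fin L.length, (i : ℕ) < (j : ℕ) → f i ≠ f j := by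
    intro i j hij heq
    have hdisj := (List.pairwise_iff_getElem.mp hpw) i j i.isLt j.isLt hij
    have h1 : f i ∈ Ioo (L[(i:ℕ)]).1 (L[(i:ℕ)]).2 := by
      have := hf1 i; rwa [List.get_eq_getElem] at this
    have h2 : f i ∈ Ioo (L[(j:ℕ)]).1 (L[(j:ℕ)]).2 := by
      have := hf1 j; rw [List.get_eq_getElem] at this; rwa [heq]
    exact Set.disjoint_left.mp hdisj h1 h2
  have hinjf : Function.Injective f := by
    intro i j heq
    by_contra hne
    rcases lt_or_gt_of_ne (fun h : (i:ℕ) = (j:ℕ) => hne (Fin.ext h)) with h | h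
    · exact hijne i j h heq
    · exact hijne j i h heq.symm
  have hrange : ∀ i, f i ∈ g ⁻¹' {t} ∩ Ioo 0 1 := fun i =>
    ⟨by simp [hf2 i], (hmem _ (L.get_mem i)).1 (hf1 i)⟩
  have hcard2 : (Finset.univ.image f).card = L.length := by
    rw [Finset.card_image_of_injective _ hinjf, Finset.card_univ, Fintype.card_fin]
  have hsubF : ↑(Finset.univ.image f) ⊆ g ⁻¹' {t} ∩ Ioo 0 1 := by
    intro z hz
    simp only [Finset.coe_image, Finset.coe_univ, Set.image_univ, Set.mem_range] at hz
    obtain ⟨i, rfl⟩ := hz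
    exact hrange i
  have hfinal := Set.ncard_le_ncard hsubF htfin
  rw [Set.ncard_coe_finset, hcard2, hlen] at hfinal
  omega
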